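/- Let g(x) = sin(πx)/(πx) and f(x) = g(x)² + g'(x)²/π². Then the Fourier transform of f (with convention f̂(ξ) = ∫ f(x)e^{-2πixξ}dx) equals f̂(ξ) = (2/3)(1-|ξ|)²(|ξ|+2) for |ξ| ≤ 1 and f̂(ξ) = 0 for |ξ| > 1. -/

import Mathlib

open MeasureTheory Real Set FourierTransform

noncomputable def sincPi (x : ℝ) : ℝ :=
  if x = 0 then 1 else Real.sin (Real.pi * x) / (Real.pi * x)

noncomputable def fejerLid (x : ℝ) : ℝ :=
  sincPi x ^ 2 + (deriv sincPi x) ^ 2 / Real.pi ^ 2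

lemma hasDerivAt_sincPi {x : ℝ} (hx : x ≠ 0) :
    HasDerivAt sincPi
      ((Real.pi * x * Real.cos (Real.pi * x) - Real.sin (Real.pi * x)) / (Real.pi * x ^ 2)) x := by
  have hπx : Real.pi * x ≠ 0 := mul_ne_zero Real.pi_ne_zero hx
  have h1 : HasDerivAt (fun y : ℝ => Real.sin (Real.pi * y)) (Real.cos (Real.pi * x) * Real.pi) x :=
    (Real.hasDerivAt_sin (Real.pi * x)).comp x ((hasDerivAt_id x).const_mul Real.pi) |>.congr_deriv (by ring)
  have h2 : HasDerivAt (fun y : ℝ => Real.pi * y) Real.pi x := (hasDerivAt_id x).const_mul Real.pi |>.congr_deriv (by ring)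
  have h3 := h1.div h2 hπx
  have heq : (fun y : ℝ => Real.sin (Real.pi * y) / (Real.pi * y)) =ᶠ[nhds x] sincPi := by
    filter_upwards [isOpen_ne.mem_nhds hx] with y hy
    simp [sincPi, hy]
  refine (h3.congr_of_eventuallyEq heq.symm).congr_deriv ?_
  field_simp

lemma deriv_sincPi {x : ℝ} (hx : x ≠ 0) :
    deriv sincPi x = (Real.pi * x * Real.cos (Real.pi * x) - Real.sin (Real.pi * x)) / (Real.pi * x ^ 2) :=
  (hasDerivAt_sincPi hx).deriv

lemma key_integral {x : ℝ} (hx : x ≠ 0) :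
    ∫ t in (0:ℝ)..1, (t ^ 3 - 3 * t + 2) * Real.cos (2 * Real.pi * x * t)
      = 3 / 4 * fejerLid x := by
  have hπ : Real.pi ≠ 0 := Real.pi_ne_zero
  set c : ℝ := 2 * Real.pi * x with hc
  have hc0 : c ≠ 0 := by
    simp only [hc]
    exact mul_ne_zero (mul_ne_zero two_ne_zero hπ) hx
  set H : ℝ → ℝ := fun u =>
    (u ^ 3 - 3 * u + 2) * Real.sin (c * u) / c + (3 * u ^ 2 - 3) * Real.cos (c * u) / c ^ 2
      - (6 * u * Real.sin (c * u) / c ^ 3 + 6 * Real.cos (c * u) / c ^ 4) with hH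
  have hHd : ∀ t : ℝ, HasDerivAt H ((t ^ 3 - 3 * t + 2) * Real.cos (c * t)) t := by
    intro t
    have hlin : HasDerivAt (fun u : ℝ => c * u) c t := by
      simpa using (hasDerivAt_id t).const_mul c
    have hs : HasDerivAt (fun u : ℝ => Real.sin (c * u)) (Real.cos (c * t) * c) t :=
      (Real.hasDerivAt_sin (c * t)).comp t hlin
    have hk : HasDerivAt (fun u : ℝ => Real.cos (c * u)) (-Real.sin (c * t) * c) t :=
      (Real.hasDerivAt_cos (c * t)).comp t hlin
    have hp : HasDerivAt (fun u : ℝ => u ^ 3 - 3 * u + 2) (3 * t ^ 2 - 3) t := by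
      simpa using ((hasDerivAt_pow 3 t).sub ((hasDerivAt_id t).const_mul 3)).add_const 2
    have hp' : HasDerivAt (fun u : ℝ => 3 * u ^ 2 - 3) (6 * t) t := by
      have := ((hasDerivAt_pow 2 t).const_mul 3).sub_const 3
      simpa using this.congr_deriv (by ring)
    have hid : HasDerivAt (fun u : ℝ => 6 * u) 6 t := by
      simpa using (hasDerivAt_id t).const_mul 6
    have h := (((hp.mul hs).div_const c).add ((hp'.mul hk).div_const (c ^ 2))).sub
      (((hid.mul hs).div_const (c ^ 3)).add ((hk.const_mul 6).div_const (c ^ 4)))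
    refine h.congr_deriv ?_
    field_simp
    ring
  have hint : ∫ t in (0:ℝ)..1, (t ^ 3 - 3 * t + 2) * Real.cos (c * t) = H 1 - H 0 := by
    refine intervalIntegral.integral_eq_sub_of_hasDerivAt (fun t _ => hHd t) ?_
    have : Continuous fun t : ℝ => (t ^ 3 - 3 * t + 2) * Real.cos (c * t) := by continuity
    exact this.intervalIntegrable 0 1
  rw [hint]
  have h2a : c = 2 * (Real.pi * x) := by rw [hc]; ring
  simp only [hH]
  rw [fejerLid, deriv_sincPi hx, sincPi, if_neg hx]
  norm_num
  rw [h2a, Real.sin_two_mul, Real.cos_two_mul]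
  have hpyth := Real.sin_sq_add_cos_sq (Real.pi * x)
  set s := Real.sin (Real.pi * x)
  set k := Real.cos (Real.pi * x)
  field_simp
  linear_combination (-(48:ℝ)) * (1 + Real.pi ^ 2 * x ^ 2) * hpyth

noncomputable def Fc : ℝ → ℂ := fun t =>
  if |t| ≤ 1 then ((2 / 3 * (1 - |t|) ^ 2 * (|t| + 2) : ℝ) : ℂ) else 0

lemma Fc_eq_max (t : ℝ) :
    Fc t = ((2 / 3 * (max (1 - |t|) 0) ^ 2 * (|t| + 2) : ℝ) : ℂ) := by
  by_cases h : |t| ≤ 1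
  · rw [Fc, if_pos h, max_eq_left (by linarith)]
  · push_neg at h
    rw [Fc, if_neg (not_le.mpr h), max_eq_right (by linarith)]
    norm_num

lemma continuous_Fc : Continuous Fc := by
  have : Continuous fun t : ℝ => ((2 / 3 * (max (1 - |t|) 0) ^ 2 * (|t| + 2) : ℝ) : ℂ) := by
    apply Complex.continuous_ofReal.comp
    continuity
  exact (funext Fc_eq_max) ▸ this

lemma Fc_even (t : ℝ) : Fc (-t) = Fc t := by simp [Fc, abs_neg]

lemma Fc_zero {t : ℝ} (ht : t ∉ Icc (-1:ℝ) 1) : Fc t = 0 := by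
  rw [Fc, if_neg]
  exact fun h => ht (mem_Icc.mpr (abs_le.mp h))

lemma integrable_Fc : Integrable Fc := by
  apply continuous_Fc.integrable_of_hasCompactSupport
  apply HasCompactSupport.intro (isCompact_Icc (a := (-1:ℝ)) (b := 1))
  exact fun x hx => Fc_zero hx

lemma fourier_Fc {x : ℝ} (hx : x ≠ 0) : 𝓕 Fc x = ((fejerLid x : ℝ) : ℂ) := by
  rw [Real.fourier_real_eq_integral_exp_smul]
  set g : ℝ → ℂ := fun v => Complex.exp (↑(-2 * Real.pi * v * x) * Complex.I) • Fc v with hg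
  have hg_cont : Continuous g := by
    rw [hg]
    apply Continuous.fun_smul _ continuous_Fc
    exact Complex.continuous_exp.comp ((Complex.continuous_ofReal.comp (by continuity)).mul
      continuous_const)
  have step1 : ∫ v, g v = ∫ v in Icc (-1:ℝ) 1, g v := by
    refine (setIntegral_eq_integral_of_forall_compl_eq_zero fun v hv => ?_).symm
    simp [hg, Fc_zero hv]
  have step2 : ∫ v in Icc (-1:ℝ) 1, g v = ∫ v in (-1:ℝ)..1, g v := by
    rw [intervalIntegral.integral_of_le (by norm_num), MeasureTheory.integral_Icc_eq_integral_Ioc]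
  have step3 : ∫ v in (-1:ℝ)..1, g v = (∫ v in (-1:ℝ)..0, g v) + ∫ v in (0:ℝ)..1, g v :=
    (intervalIntegral.integral_add_adjacent_intervals (hg_cont.intervalIntegrable _ _)
      (hg_cont.intervalIntegrable _ _)).symm
  have step4 : ∫ v in (-1:ℝ)..0, g v = ∫ v in (0:ℝ)..1, g (-v) := by
    rw [intervalIntegral.integral_comp_neg]
    norm_num
  have step5 : (∫ v in (0:ℝ)..1, g (-v)) + ∫ v in (0:ℝ)..1, g v
      = ∫ v in (0:ℝ)..1, (g (-v) + g v) :=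
    (intervalIntegral.integral_add ((hg_cont.comp continuous_neg).intervalIntegrable _ _)
      (hg_cont.intervalIntegrable _ _)).symm
  have step6 : ∫ v in (0:ℝ)..1, (g (-v) + g v)
      = ∫ v in (0:ℝ)..1, ((4 / 3 * (v ^ 3 - 3 * v + 2) * Real.cos (2 * Real.pi * x * v) : ℝ) : ℂ) := by
    refine intervalIntegral.integral_congr fun v hv => ?_
    have hv' : v ∈ Icc (0:ℝ) 1 := by rwa [uIcc_of_le (by norm_num)] at hv
    have habs : |v| = v := abs_of_nonneg hv'.1
    have hFv : Fc v = ((2 / 3 * (1 - v) ^ 2 * (v + 2) : ℝ) : ℂ) := by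
      rw [Fc, habs, if_pos hv'.2]
    have hFnv : Fc (-v) = Fc v := Fc_even v
    simp only [hg, hFnv, hFv, smul_eq_mul]
    rw [← add_mul]
    have hexp : Complex.exp (↑(-2 * Real.pi * (-v) * x) * Complex.I)
        + Complex.exp (↑(-2 * Real.pi * v * x) * Complex.I)
        = ((2 * Real.cos (2 * Real.pi * x * v) : ℝ) : ℂ) := by
      rw [Complex.exp_mul_I, Complex.exp_mul_I]
      push_cast
      rw [show ((-2 : ℂ) * Real.pi * (-v) * x) = -(-2 * Real.pi * v * x) by ring,
        Complex.cos_neg, Complex.sin_neg,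
        show ((-2 : ℂ) * Real.pi * v * x) = -(2 * Real.pi * x * v) by ring,
        Complex.cos_neg, Complex.sin_neg]
      ring
    rw [hexp]
    push_cast
    ring
  rw [step1, step2, step3, step4, step5, step6, intervalIntegral.integral_ofReal]
  norm_cast
  rw [show (fun v : ℝ => 4 / 3 * (v ^ 3 - 3 * v + 2) * Real.cos (2 * Real.pi * x * v))
      = (fun v : ℝ => 4 / 3 * ((v ^ 3 - 3 * v + 2) * Real.cos (2 * Real.pi * x * v))) from
      funext fun v => by ring, intervalIntegral.integral_const_mul, key_integral hx]
  ring

lemma continuous_fourier_Fc : Continuous (𝓕 Fc) :=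
  VectorFourier.fourierIntegral_continuous Real.continuous_fourierChar
    (by exact continuous_inner) integrable_Fc

lemma fourier_Fc_even (x : ℝ) : 𝓕 Fc (-x) = 𝓕 Fc x := by
  rw [← Real.fourierInv_eq_fourier_neg,
    Real.fourierInv_eq_fourier_comp_neg]
  congr 1
  rw [funext Fc_even]

lemma fejerLid_bound {x : ℝ} (hx : 1 ≤ |x|) :
    ‖𝓕 Fc x‖ ≤ 5 / Real.pi ^ 2 * (x ^ 2)⁻¹ := by
  have hx0 : x ≠ 0 := by intro h; rw [h] at hx; simp at hx; linarith
  rw [fourier_Fc hx0, Complex.norm_real]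
  have hπ := Real.pi_gt_three
  have hx2 : 1 ≤ x ^ 2 := by nlinarith [abs_nonneg x, sq_abs x]
  set s := Real.sin (Real.pi * x)
  set k := Real.cos (Real.pi * x)
  have hs : s ^ 2 ≤ 1 := Real.sin_sq_le_one _
  have hk : k ^ 2 ≤ 1 := Real.cos_sq_le_one _
  have hL : fejerLid x = s ^ 2 / (Real.pi * x) ^ 2
      + (Real.pi * x * k - s) ^ 2 / (Real.pi * x) ^ 4 := by
    rw [fejerLid, deriv_sincPi hx0, sincPi, if_neg hx0]
    field_simp
    ring
  have hnn : 0 ≤ fejerLid x := by rw [hL]; positivity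
  rw [Real.norm_eq_abs, abs_of_nonneg hnn, hL]
  rw [div_add_div _ _ (by positivity) (by positivity), div_le_iff₀ (by positivity)]
  have h9' : 9 < Real.pi ^ 2 := by nlinarith [hπ]
  have h9 : 9 ≤ (Real.pi * x) ^ 2 := by
    nlinarith [mul_le_mul_of_nonneg_left hx2 (by positivity : (0:ℝ) ≤ Real.pi ^ 2), h9']
  have h4 : (Real.pi * x * k - s) ^ 2 ≤ 4 * (Real.pi * x) ^ 2 := by
    nlinarith [sq_nonneg (Real.pi * x * k + s),
      mul_nonneg (sub_nonneg.mpr hk) (sq_nonneg (Real.pi * x)), hs, h9]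
  have hrhs : 5 / Real.pi ^ 2 * (x ^ 2)⁻¹ * ((Real.pi * x) ^ 2 * (Real.pi * x) ^ 4)
      = 5 * (Real.pi * x) ^ 4 := by
    field_simp
  rw [hrhs]
  have hint1 : 0 ≤ (1 - s ^ 2) * (Real.pi * x) ^ 4 :=
    mul_nonneg (by linarith) (by positivity)
  have hint2 : (Real.pi * x) ^ 2 * (Real.pi * x * k - s) ^ 2
      ≤ (Real.pi * x) ^ 2 * (4 * (Real.pi * x) ^ 2) :=
    mul_le_mul_of_nonneg_left h4 (by positivity)
  nlinarith [hint1, hint2]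

lemma integrableOn_fourier_Ioi : IntegrableOn (𝓕 Fc) (Ioi (1:ℝ)) := by
  have hmaj : IntegrableOn (fun x : ℝ => 5 / Real.pi ^ 2 * x ^ (-2:ℝ)) (Ioi (1:ℝ)) :=
    (integrableOn_Ioi_rpow_of_lt (by norm_num) one_pos).const_mul _
  refine Integrable.mono' hmaj (continuous_fourier_Fc.aestronglyMeasurable.restrict) ?_
  filter_upwards [ae_restrict_mem measurableSet_Ioi] with x hx
  have hx1 : (1:ℝ) < x := hx
  have h := fejerLid_bound (by rw [abs_of_pos (by linarith)]; linarith)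
  rwa [show x ^ (-2:ℝ) = (x ^ 2)⁻¹ by
    rw [← Real.rpow_natCast x 2, ← Real.rpow_neg (by linarith)]; norm_num]

lemma integrable_fourier_Fc : Integrable (𝓕 Fc) := by
  have A : MeasurableEmbedding (fun x : ℝ => -x) :=
    (Homeomorph.neg ℝ).isClosedEmbedding.measurableEmbedding
  have h1 : IntegrableOn (𝓕 Fc) (Icc (-1:ℝ) 1) :=
    continuous_fourier_Fc.continuousOn.integrableOn_compact isCompact_Icc
  have h2 := integrableOn_fourier_Ioi
  have h3 : IntegrableOn (𝓕 Fc) (Iio (-1:ℝ)) := by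
    rw [IntegrableOn, ← Measure.map_neg_eq_self (volume : Measure ℝ), A.restrict_map,
      A.integrable_map_iff]
    have hpre : (fun x : ℝ => -x) ⁻¹' Iio (-1:ℝ) = Ioi 1 := by
      ext y; simp [neg_lt]
    rw [hpre]
    refine h2.congr_fun ?_ measurableSet_Ioi
    intro y _
    exact (fourier_Fc_even y).symm
  have hunion : IntegrableOn (𝓕 Fc) (Iio (-1:ℝ) ∪ Icc (-1) 1 ∪ Ioi 1) :=
    (h3.union h1).union h2
  have hcover : (Iio (-1:ℝ) ∪ Icc (-1) 1 ∪ Ioi 1) = univ := by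
    ext y
    simp only [mem_union, mem_Iio, mem_Icc, mem_Ioi, mem_univ, iff_true]
    rcases lt_or_ge y (-1) with h | h
    · exact Or.inl (Or.inl h)
    · rcases le_or_gt y 1 with h' | h'
      · exact Or.inl (Or.inr ⟨h, h'⟩)
      · exact Or.inr h'
  rwa [hcover, integrableOn_univ] at hunion

theorem fourier_transform_fejer_lid :
    ∀ ξ : ℝ, 𝓕 (fun x : ℝ => (fejerLid x : ℂ)) ξ =
      if |ξ| ≤ 1 then ((2 / 3 * (1 - |ξ|) ^ 2 * (|ξ| + 2) : ℝ) : ℂ) else 0 := by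
  intro ξ
  have hae : (fun x : ℝ => (fejerLid x : ℂ)) =ᵐ[volume] 𝓕 Fc := by
    have h0 : ∀ᵐ x : ℝ, x ∈ ({0}ᶜ : Set ℝ) :=
      compl_mem_ae_iff.mpr (measure_singleton 0)
    filter_upwards [h0] with x hx0
    exact (fourier_Fc hx0).symm
  have step1 : 𝓕 (fun x : ℝ => (fejerLid x : ℂ)) ξ = 𝓕 (𝓕 Fc) ξ := by
    rw [Real.fourier_real_eq, Real.fourier_real_eq]
    refine integral_congr_ae ?_
    filter_upwards [hae] with x h
    rw [h]
  have step2 : 𝓕 (𝓕 Fc) ξ = 𝓕⁻ (𝓕 Fc) (-ξ) := by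
    rw [Real.fourierInv_eq_fourier_neg, neg_neg]
  have step3 : 𝓕⁻ (𝓕 Fc) (-ξ) = Fc (-ξ) :=
    integrable_Fc.fourierInv_fourier_eq integrable_fourier_Fc continuous_Fc.continuousAt
  rw [step1, step2, step3, Fc_even]
  rfl
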